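/- The 5-dimensional Lotka-Volterra map φ(v₀,...,v₄) = (v₁,...,v₄, v₃(v₀+1)/v₂ - 1) preserves the function I₂ = v₀v₃ - v₂ + v₁v₄. -/
import Mathlib

/-- The (3,-2) reduction of the discrete Lotka-Volterra equation preserves I₂. -/
theorem lv_map_preserves_I2 (v0 v1 v2 v3 v4 : ℝ)
    (h2 : v2 ≠ 0)
    (v5 : ℝ) (hv5 : v5 = v3 * (v0 + 1) / v2 - 1) :
    v1 * v4 - v3 + v2 * v5 = v0 * v3 - v2 + v1 * v4 := by
  subst hv5; field_simp; ring
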